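/- arXiv:2110.13678 — 7 statements merged into one kernel-verified Lean document; each statement's English description precedes it below -/
import Mathlib

section
/- Let ((S^a)_{a∈I}, 𝔽, 𝔾, T) be a standard platonic market with 𝒫_p ≠ ∅ for some p ∈ [1,∞). Let δ = (δ^A)_{A∈𝒜} be a family of information delays, each δ^A an information delay for 𝔽^A, and let 𝔽^δ = (𝔽^{A,δ})_{A∈𝒜} be the recursively defined δ-delayed filtrations. If ((S^a)_{a∈I}, 𝔽, 𝔾, T) satisfies the no asymptotic L^p-free lunch condition (NAFLp), then the delayed market ((S^a)_{a∈I}, 𝔽^δ, 𝔾, T) — i.e. the market in which 𝔽^A-simple bounded trading strategies are replaced by 𝔽^{A,δ}-simple bounded trading strategies — also satisfies the no asymptotic L^p-free lunch condition. -/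
open MeasureTheory Set Filter
open scoped ENNReal NNReal

noncomputable section

/-- The σ-field of the `τ`-past: generated by the sets `A` such that `A ∩ {τ ≤ s}` is
`F s`-measurable for every time `s` in the time domain `D` of the filtration `F`.
(When `τ` is a stopping time this family is itself a σ-algebra.) -/
def pastSigma {Ω ι : Type*} [Preorder ι] (F : ι → MeasurableSpace Ω) (D : Set ι)
    (τ : Ω → ι) : MeasurableSpace Ω :=
  MeasurableSpace.generateFrom {A | ∀ s ∈ D, MeasurableSet[F s] (A ∩ {ω | τ ω ≤ s})}

/-- An information delay for the filtration `F = (F t)_{t ∈ [0,T]}`: each `δ t` is an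
`F`-stopping time, `0 ≤ δ t ω ≤ t`, and `δ` is pathwise monotone. -/
def IsInformationDelay {Ω : Type*} (F : ℝ≥0∞ → MeasurableSpace Ω) (T : ℝ≥0∞)
    (δ : ℝ≥0∞ → Ω → ℝ≥0∞) : Prop :=
  (∀ t ≤ T, ∀ s ≤ T, MeasurableSet[F s] {ω | δ t ω ≤ s}) ∧
  (∀ t ≤ T, ∀ ω, δ t ω ≤ t) ∧
  (∀ t u : ℝ≥0∞, t ≤ u → u ≤ T → ∀ ω, δ t ω ≤ δ u ω)

/-- The recursively defined `δ`-delayed filtrations: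
`𝓕^{A,δ}_t = σ(𝓕^A_{δ^A(t)} ∪ ⋃ {𝓕^{A',δ}_t : A' ∈ 𝒜, A' ⊊ A})`. -/
def delayedFiltration {Ω I : Type*} (F : Finset I → ℝ≥0∞ → MeasurableSpace Ω)
    (T : ℝ≥0∞) (𝒜 : Set (Finset I)) (δ : Finset I → ℝ≥0∞ → Ω → ℝ≥0∞)
    (A : Finset I) (t : ℝ≥0∞) : MeasurableSpace Ω :=
  pastSigma (F A) (Set.Iic T) (δ A t) ⊔
    ⨆ (A' : Finset I) (_ : A' ∈ 𝒜) (_ : A' ⊂ A), delayedFiltration F T 𝒜 δ A' t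
termination_by A.card
decreasing_by exact Finset.card_lt_card ‹A' ⊂ A›

/-- `X` is the terminal wealth of an `𝔽^A`-simple bounded trading strategy on a market
fraction `A ∈ 𝒜`, with trading times `0 ≤ t 0 < … < t m ≤ T`:  `X ∈ K₀`. -/
def IsTerminalWealth {Ω I : Type*} (𝒜 : Set (Finset I))
    (F : Finset I → ℝ≥0∞ → MeasurableSpace Ω) (S : I → ℝ≥0∞ → Ω → ℝ) (T : ℝ≥0∞)
    (X : Ω → ℝ) : Prop :=
  ∃ A ∈ 𝒜, ∃ (m : ℕ) (t : ℕ → ℝ≥0∞) (H : I → ℕ → Ω → ℝ),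
    (∀ i, i < m → t i < t (i + 1)) ∧ (∀ i, i ≤ m → t i ≤ T) ∧
    (∀ a ∈ A, ∀ i, i < m → Measurable[F A (t i)] (H a i)) ∧
    (∃ Cb : ℝ, ∀ a ∈ A, ∀ i, i < m → ∀ ω, |H a i ω| ≤ Cb) ∧
    ∀ ω, X ω = ∑ a ∈ A, ∑ i ∈ Finset.range m, H a i ω * (S a (t (i + 1)) ω - S a (t i) ω)

/-- `X ∈ C = K₀ - L⁰₊(Ω, 𝒢, P)`. -/
def InC {Ω I : Type*} [MeasurableSpace Ω] (𝒜 : Set (Finset I))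
    (F : Finset I → ℝ≥0∞ → MeasurableSpace Ω) (S : I → ℝ≥0∞ → Ω → ℝ) (T : ℝ≥0∞)
    (X : Ω → ℝ) : Prop :=
  ∃ k h : Ω → ℝ, IsTerminalWealth 𝒜 F S T k ∧ Measurable h ∧ (∀ ω, 0 ≤ h ω) ∧
    ∀ ω, X ω = k ω - h ω

/-- `P' ∈ 𝒫_p`: `P'` is a probability measure equivalent to `P` with `K₀ ⊆ L^p(P')`. -/
def MemPp {Ω I : Type*} [MeasurableSpace Ω] (P P' : Measure Ω) (p : ℝ≥0∞)
    (𝒜 : Set (Finset I)) (F : Finset I → ℝ≥0∞ → MeasurableSpace Ω)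
    (S : I → ℝ≥0∞ → Ω → ℝ) (T : ℝ≥0∞) : Prop :=
  IsProbabilityMeasure P' ∧ P' ≪ P ∧ P ≪ P' ∧
    ∀ X : Ω → ℝ, IsTerminalWealth 𝒜 F S T X → MemLp X p P'

/-- The market satisfies the no asymptotic `L^p`-free lunch condition (NAFLp): for some
`P' ∈ 𝒫_p`, the `L^p(P')`-norm closure of `C_p(P') = C ∩ L^p(P')` meets the nonnegative
cone `L^p₊(P')` only in `0`. -/
def SatisfiesNAFLp {Ω I : Type*} [MeasurableSpace Ω] (P : Measure Ω) (p : ℝ≥0∞)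
    (𝒜 : Set (Finset I)) (F : Finset I → ℝ≥0∞ → MeasurableSpace Ω)
    (S : I → ℝ≥0∞ → Ω → ℝ) (T : ℝ≥0∞) : Prop :=
  ∃ P' : Measure Ω, MemPp P P' p 𝒜 F S T ∧
    ∀ X : Ω → ℝ, MemLp X p P' → (∀ᵐ ω ∂P', 0 ≤ X ω) →
      (∀ ε : ℝ≥0∞, 0 < ε → ∃ f : Ω → ℝ, InC 𝒜 F S T f ∧ MemLp f p P' ∧
        eLpNorm (f - X) p P' < ε) →
      ∀ᵐ ω ∂P', X ω = 0

lemma delayedFiltration_le {Ω I : Type*} [DecidableEq I]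
    (T : ℝ≥0∞) (𝒜 : Set (Finset I))
    (F : Finset I → ℝ≥0∞ → MeasurableSpace Ω)
    (hFmono : ∀ A ∈ 𝒜, ∀ A' ∈ 𝒜, A ⊆ A' → ∀ t ≤ T, F A t ≤ F A' t)
    (δ : Finset I → ℝ≥0∞ → Ω → ℝ≥0∞)
    (hδ : ∀ A ∈ 𝒜, IsInformationDelay (F A) T (δ A)) :
    ∀ A, A ∈ 𝒜 → ∀ t, t ≤ T → delayedFiltration F T 𝒜 δ A t ≤ F A t := by
  intro A
  induction A using Finset.strongInduction with
  | _ A ih =>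
    intro hA t ht
    rw [delayedFiltration]
    apply sup_le
    · apply MeasurableSpace.generateFrom_le
      intro B hB
      have h1 := hB t ht
      have hBe : B ∩ {ω | δ A t ω ≤ t} = B := by
        ext ω
        simp [(hδ A hA).2.1 t ht ω]
      rwa [hBe] at h1
    · refine iSup_le fun A' => iSup_le fun hA' => iSup_le fun hsub => ?_
      exact (ih A' hsub hA' t ht).trans (hFmono A' hA' A hA hsub.subset t ht)

lemma isTerminalWealth_of_delayed {Ω I : Type*} [DecidableEq I]
    (T : ℝ≥0∞) (𝒜 : Set (Finset I))
    (F : Finset I → ℝ≥0∞ → MeasurableSpace Ω)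
    (hFmono : ∀ A ∈ 𝒜, ∀ A' ∈ 𝒜, A ⊆ A' → ∀ t ≤ T, F A t ≤ F A' t)
    (δ : Finset I → ℝ≥0∞ → Ω → ℝ≥0∞)
    (hδ : ∀ A ∈ 𝒜, IsInformationDelay (F A) T (δ A))
    (S : I → ℝ≥0∞ → Ω → ℝ) (X : Ω → ℝ)
    (hX : IsTerminalWealth 𝒜 (delayedFiltration F T 𝒜 δ) S T X) :
    IsTerminalWealth 𝒜 F S T X := by
  obtain ⟨A, hA, m, t, H, ht1, ht2, hmeas, hbd, hsum⟩ := hX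
  refine ⟨A, hA, m, t, H, ht1, ht2, fun a ha i hi => ?_, hbd, hsum⟩
  exact (hmeas a ha i hi).mono
    (delayedFiltration_le T 𝒜 F hFmono δ hδ A hA (t i) (ht2 i hi.le)) le_rfl

/-- **NAFLp with information delay.** If a standard platonic market
`((S^a)_{a∈I}, 𝔽, 𝔾, T)` with `𝒫_p ≠ ∅` satisfies the no asymptotic `L^p`-free lunch
condition, then so does the market `((S^a)_{a∈I}, 𝔽^δ, 𝔾, T)` in which the trading
filtrations are replaced by the recursively defined `δ`-delayed filtrations for a family
`δ = (δ^A)_{A∈𝒜}` of information delays. -/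
theorem NAFLp_informationDelay
    {Ω I : Type*} [DecidableEq I] [m𝒢 : MeasurableSpace Ω]
    (P : Measure Ω) [IsProbabilityMeasure P]
    (T : ℝ≥0∞) (hT : 0 < T)
    (G : ℝ≥0∞ → MeasurableSpace Ω)
    (hGmono : ∀ s t : ℝ≥0∞, s ≤ t → t ≤ T → G s ≤ G t)
    (hGT : G T = m𝒢)
    (𝒜 : Set (Finset I)) (h𝒜 : ∀ A₁ ∈ 𝒜, ∀ A₂ ∈ 𝒜, A₁ ∪ A₂ ∈ 𝒜)
    (F : Finset I → ℝ≥0∞ → MeasurableSpace Ω)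
    (hFfilt : ∀ A ∈ 𝒜, ∀ s t : ℝ≥0∞, s ≤ t → t ≤ T → F A s ≤ F A t)
    (hFG : ∀ A ∈ 𝒜, ∀ t ≤ T, F A t ≤ G t)
    (hFmono : ∀ A ∈ 𝒜, ∀ A' ∈ 𝒜, A ⊆ A' → ∀ t ≤ T, F A t ≤ F A' t)
    (S : I → ℝ≥0∞ → Ω → ℝ)
    (hSadapted : ∀ a, ∀ t ≤ T, Measurable[G t] (S a t))
    (p : ℝ≥0∞) (hp : 1 ≤ p) (hp' : p ≠ ⊤)
    (hPp : ∃ P' : Measure Ω, MemPp P P' p 𝒜 F S T)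
    (δ : Finset I → ℝ≥0∞ → Ω → ℝ≥0∞)
    (hδ : ∀ A ∈ 𝒜, IsInformationDelay (F A) T (δ A))
    (hNAFL : SatisfiesNAFLp P p 𝒜 F S T) :
    SatisfiesNAFLp P p 𝒜 (delayedFiltration F T 𝒜 δ) S T := by
  obtain ⟨P', ⟨hP'prob, hP'P, hPP', hLp⟩, hNA⟩ := hNAFL
  have hTW : ∀ X : Ω → ℝ, IsTerminalWealth 𝒜 (delayedFiltration F T 𝒜 δ) S T X →
      IsTerminalWealth 𝒜 F S T X :=
    fun X hX => isTerminalWealth_of_delayed T 𝒜 F hFmono δ hδ S X hX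
  have hInC : ∀ f : Ω → ℝ, InC 𝒜 (delayedFiltration F T 𝒜 δ) S T f → InC 𝒜 F S T f := by
    rintro f ⟨k, h, hk, hh, hh0, hf⟩
    exact ⟨k, h, hTW k hk, hh, hh0, hf⟩
  refine ⟨P', ⟨hP'prob, hP'P, hPP', fun X hX => hLp X (hTW X hX)⟩, ?_⟩
  intro X hXp hX0 happrox
  refine hNA X hXp hX0 fun ε hε => ?_
  obtain ⟨f, hfC, hfp, hfε⟩ := happrox ε hε
  exact ⟨f, hInC f hfC, hfp, hfε⟩
end
end

section
/- Let 𝔽 = (𝓕_t)_{t∈ℝ₊} be a right-continuous filtration (𝓕_t = ⋂_{u>t} 𝓕_u) of sub-σ-algebras of 𝒢 on a probability space (Ω, 𝒢, P), and let T ∈ (0,∞). Let π = (π(s))_{s∈[0,T]} be an order execution delay for 𝔽 that is pathwise continuous and satisfies π(0,ω) = 0 for all ω ∈ Ω. Define the time-changed filtration 𝓕̃_s := 𝓕_{π(s)} (the σ-field of the π(s)-past), s ∈ [0,T], and δ(t,ω) := min( inf{s ∈ [0,T] : π(s,ω) ≥ t}, T ) for t ∈ [0,T]. Then: (i) δ is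 an information delay for 𝔽̃ = (𝓕̃_s)_{s∈[0,T]}, i.e. each δ(t) is an 𝔽̃-stopping time, 0 ≤ δ(t,ω) ≤ t, and δ(t,ω) ≤ δ(u,ω) for t ≤ u; and (ii) the δ-delayed filtration of 𝔽̃ recovers 𝔽: for every t ∈ [0,T], the σ-field of the δ(t)-past with respect to 𝔽̃ equals 𝓕_t. -/
open MeasureTheory Set Filter
open scoped ENNReal NNReal
open scoped Topology

noncomputable section

/-- If `τ` is a stopping time, `pastSigma F univ τ` is exactly the family of sets `A`
with `A ∩ {τ ≤ u}` measurable for all `u`. -/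
lemma pastSigma_eq_stopping {Ω : Type*} {m𝒢 : MeasurableSpace Ω}
    (F : ℝ≥0 → MeasurableSpace Ω) (hFle : ∀ u, F u ≤ m𝒢) (hFmono : Monotone F)
    (τ : Ω → ℝ≥0) (hτ : ∀ u : ℝ≥0, MeasurableSet[F u] {ω | τ ω ≤ u}) (A : Set Ω) :
    MeasurableSet[pastSigma F Set.univ τ] A ↔
      ∀ u : ℝ≥0, MeasurableSet[F u] (A ∩ {ω | τ ω ≤ u}) := by
  let M : MeasurableSpace Ω :=
    { MeasurableSet' := fun A => ∀ u : ℝ≥0, MeasurableSet[F u] (A ∩ {ω | τ ω ≤ u})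
      measurableSet_empty := fun u => by simp
      measurableSet_compl := fun A hA u => by
        have h : Aᶜ ∩ {ω | τ ω ≤ u} = {ω | τ ω ≤ u} \ (A ∩ {ω | τ ω ≤ u}) := by
          ext ω; simp only [Set.mem_inter_iff, Set.mem_compl_iff, Set.mem_diff]; tauto
        rw [h]
        exact (hτ u).diff (hA u)
      measurableSet_iUnion := fun f hf u => by
        rw [Set.iUnion_inter]
        exact MeasurableSet.iUnion fun i => hf i u }
  have hset : {A : Set Ω | ∀ s ∈ (Set.univ : Set ℝ≥0), MeasurableSet[F s] (A ∩ {ω | τ ω ≤ s})}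
      = {A : Set Ω | MeasurableSet[M] A} := by
    ext B
    simp only [Set.mem_setOf_eq, Set.mem_univ, true_implies]
    exact Iff.rfl
  have : pastSigma F Set.univ τ = M := by
    rw [pastSigma, hset]
    exact @MeasurableSpace.generateFrom_measurableSet Ω M
  rw [this]
  exact Iff.rfl

/-- Let `𝔽 = (𝓕_u)_{u∈ℝ₊}` be right-continuous and `π` a pathwise
continuous order execution delay for `𝔽` with `π(0) = 0`.  With `𝓕̃_s := 𝓕_{π(s)}` and
`δ(t,ω) := min(inf {s ∈ [0,T] : π(s,ω) ≥ t}, T)`: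
(i) `δ` is an information delay for `𝔽̃ = (𝓕̃_s)_{s∈[0,T]}`; and
(ii) the `δ`-delayed filtration of `𝔽̃` recovers `𝔽`: the σ-field of the `δ(t)`-past with
respect to `𝔽̃` equals `𝓕_t` for every `t ∈ [0,T]`. -/
theorem executionDelay_as_informationDelay
    {Ω : Type*} [m𝒢 : MeasurableSpace Ω] (P : Measure Ω) [IsProbabilityMeasure P]
    (F : ℝ≥0 → MeasurableSpace Ω)
    (hFle : ∀ u, F u ≤ m𝒢) (hFmono : Monotone F)
    (hFrc : ∀ u : ℝ≥0, F u = ⨅ v ∈ Set.Ioi u, F v)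
    (T : ℝ≥0) (hT : 0 < T)
    (π : ℝ≥0 → Ω → ℝ≥0)
    (hπstop : ∀ s ≤ T, ∀ u : ℝ≥0, MeasurableSet[F u] {ω | π s ω ≤ u})
    (hπge : ∀ s ≤ T, ∀ ω, s ≤ π s ω)
    (hπmono : ∀ s u : ℝ≥0, s ≤ u → u ≤ T → ∀ ω, π s ω ≤ π u ω)
    (hπcont : ∀ ω, ContinuousOn (fun s => π s ω) (Set.Icc 0 T))
    (hπzero : ∀ ω, π 0 ω = 0) :
    ((∀ t ≤ T, ∀ s ≤ T, MeasurableSet[pastSigma F Set.univ (π s)]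
        {ω | min (sInf {s' : ℝ≥0 | s' ≤ T ∧ t ≤ π s' ω}) T ≤ s}) ∧
      (∀ t ≤ T, ∀ ω, min (sInf {s' : ℝ≥0 | s' ≤ T ∧ t ≤ π s' ω}) T ≤ t) ∧
      (∀ t u : ℝ≥0, t ≤ u → u ≤ T → ∀ ω,
        min (sInf {s' : ℝ≥0 | s' ≤ T ∧ t ≤ π s' ω}) T ≤
          min (sInf {s' : ℝ≥0 | s' ≤ T ∧ u ≤ π s' ω}) T)) ∧
    (∀ t ≤ T,
      pastSigma (fun s => pastSigma F Set.univ (π s)) (Set.Iic T)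
        (fun ω => min (sInf {s' : ℝ≥0 | s' ≤ T ∧ t ≤ π s' ω}) T) = F t) := by
  -- Notation
  set S : ℝ≥0 → Ω → Set ℝ≥0 := fun t ω => {s' : ℝ≥0 | s' ≤ T ∧ t ≤ π s' ω} with hS
  set δ : ℝ≥0 → Ω → ℝ≥0 := fun t ω => sInf (S t ω) with hδ
  have hbdd : ∀ t ω, BddBelow (S t ω) := fun t ω => OrderBot.bddBelow _
  -- T belongs to S t ω when t ≤ T
  have hTmem : ∀ t, t ≤ T → ∀ ω, T ∈ S t ω := fun t ht ω =>
    ⟨le_rfl, le_trans ht (hπge T le_rfl ω)⟩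
  have hSne : ∀ t, t ≤ T → ∀ ω, (S t ω).Nonempty := fun t ht ω => ⟨T, hTmem t ht ω⟩
  -- S t ω is closed
  have hSclosed : ∀ t ω, IsClosed (S t ω) := by
    intro t ω
    have : S t ω = Set.Icc 0 T ∩ (fun s => π s ω) ⁻¹' Set.Ici t := by
      ext s'; simp [hS, Set.mem_Icc]
    rw [this]
    exact (hπcont ω).preimage_isClosed_of_isClosed isClosed_Icc isClosed_Ici
  -- the infimum is attained
  have hδmem : ∀ t, t ≤ T → ∀ ω, δ t ω ∈ S t ω := fun t ht ω =>
    (hSclosed t ω).csInf_mem (hSne t ht ω) (hbdd t ω)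
  have hδleT : ∀ t (ht : t ≤ T) ω, δ t ω ≤ T := fun t ht ω => (hδmem t ht ω).1
  have hπδge : ∀ t (ht : t ≤ T) ω, t ≤ π (δ t ω) ω := fun t ht ω => (hδmem t ht ω).2
  have hmin : ∀ t (ht : t ≤ T) ω, min (δ t ω) T = δ t ω := fun t ht ω =>
    min_eq_left (hδleT t ht ω)
  have hδle : ∀ t (ht : t ≤ T) ω, δ t ω ≤ t := fun t ht ω =>
    csInf_le (hbdd t ω) ⟨ht, hπge t ht ω⟩
  -- characterization {δ t ≤ s} = {t ≤ π s} for s ≤ T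
  have hiff : ∀ t (ht : t ≤ T), ∀ s ≤ T, ∀ ω, δ t ω ≤ s ↔ t ≤ π s ω := by
    intro t ht s hs ω
    constructor
    · intro h
      exact le_trans (hπδge t ht ω) (hπmono _ s h hs ω)
    · intro h
      exact csInf_le (hbdd t ω) ⟨hs, h⟩
  -- π (δ t ω) ω = t
  have hπδ : ∀ t (ht : t ≤ T) ω, π (δ t ω) ω = t := by
    intro t ht ω
    refine le_antisymm ?_ (hπδge t ht ω)
    by_contra hlt
    push_neg at hlt
    rcases eq_or_lt_of_le (zero_le : 0 ≤ δ t ω) with h0 | h0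
    · have hpz : π (δ t ω) ω = 0 := by rw [← h0]; exact hπzero ω
      rw [hpz] at hlt
      exact absurd hlt (not_lt_of_ge (zero_le : 0 ≤ t))
    · -- δ t ω > 0 : use left-continuity to contradict minimality
      have hcw : ContinuousWithinAt (fun s => π s ω) (Set.Icc 0 T) (δ t ω) :=
        hπcont ω _ ⟨zero_le, hδleT t ht ω⟩
      have hev : (fun s => π s ω) ⁻¹' Set.Ioi t ∈ 𝓝[Set.Icc 0 T] (δ t ω) :=
        hcw (Ioi_mem_nhds hlt)
      have hsub : Set.Iio (δ t ω) ⊆ Set.Icc 0 T := fun x hx =>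
        ⟨zero_le, le_trans (le_of_lt hx) (hδleT t ht ω)⟩
      have hev' : (fun s => π s ω) ⁻¹' Set.Ioi t ∈ 𝓝[Set.Iio (δ t ω)] (δ t ω) :=
        nhdsWithin_mono _ hsub hev
      have hne : (𝓝[Set.Iio (δ t ω)] (δ t ω)).NeBot :=
        nhdsWithin_Iio_self_neBot' ⟨0, h0⟩
      obtain ⟨s', hs'E, hs'lt⟩ :=
        Filter.nonempty_of_mem (Filter.inter_mem hev' self_mem_nhdsWithin)
      have hs'T : s' ≤ T := le_trans (le_of_lt hs'lt) (hδleT t ht ω)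
      have : s' ∈ S t ω := ⟨hs'T, le_of_lt hs'E⟩
      exact absurd (csInf_le (hbdd t ω) this) (not_le_of_gt hs'lt)
  -- ℱ as a filtration for stopping-time arguments
  -- measurability of {ω | π s ω < t} w.r.t. F u for t ≤ u
  have hltmeas : ∀ s ≤ T, ∀ t u : ℝ≥0, t ≤ u → MeasurableSet[F u] {ω | π s ω < t} := by
    intro s hs t u htu
    have heq : {ω | π s ω < t} =
        ⋃ q : ℚ, {ω | Real.toNNReal q < t ∧ π s ω ≤ Real.toNNReal q} := by
      ext ω
      simp only [Set.mem_setOf_eq, Set.mem_iUnion]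
      constructor
      · intro h
        obtain ⟨q, hq1, hq2⟩ := exists_rat_btwn (NNReal.coe_lt_coe.2 h)
        have hq0 : (0:ℝ) ≤ q := le_trans (π s ω).coe_nonneg (le_of_lt hq1)
        refine ⟨q, ?_, ?_⟩
        · exact (Real.toNNReal_lt_iff_lt_coe hq0).2 hq2
        · exact (Real.le_toNNReal_iff_coe_le hq0).2 (le_of_lt hq1)
      · rintro ⟨q, hq1, hq2⟩
        exact lt_of_le_of_lt hq2 hq1
    rw [heq]
    refine MeasurableSet.iUnion fun q => ?_
    by_cases hq : Real.toNNReal q < t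
    · have : {ω | Real.toNNReal q < t ∧ π s ω ≤ Real.toNNReal q}
          = {ω | π s ω ≤ Real.toNNReal q} := by
        ext ω; simp [hq]
      rw [this]
      exact hFmono (le_trans (le_of_lt hq) htu) _ (hπstop s hs _)
    · have : {ω | Real.toNNReal q < t ∧ π s ω ≤ Real.toNNReal q} = (∅ : Set Ω) := by
        ext ω; simp [hq]
      rw [this]
      exact @MeasurableSet.empty _ (F u)
  -- measurability of {t ≤ π s} ∩ {π s ≤ u} w.r.t. F u
  have hkey : ∀ s ≤ T, ∀ t u : ℝ≥0,
      MeasurableSet[F u] ({ω | t ≤ π s ω} ∩ {ω | π s ω ≤ u}) := by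
    intro s hs t u
    rcases le_or_gt t u with htu | hut
    · have heq : {ω | t ≤ π s ω} ∩ {ω | π s ω ≤ u}
          = {ω | π s ω ≤ u} \ {ω | π s ω < t} := by
        ext ω
        simp only [Set.mem_inter_iff, Set.mem_setOf_eq, Set.mem_diff, not_lt]
        tauto
      rw [heq]
      exact (hπstop s hs u).diff (hltmeas s hs t u htu)
    · have heq : {ω | t ≤ π s ω} ∩ {ω | π s ω ≤ u} = (∅ : Set Ω) := by
        ext ω
        simp only [Set.mem_inter_iff, Set.mem_setOf_eq, Set.mem_empty_iff_false, iff_false,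
          not_and, not_le]
        intro h1
        exact lt_of_lt_of_le hut h1
      rw [heq]
      exact @MeasurableSet.empty _ (F u)
  -- the event {min (δ t) T ≤ s} equals {t ≤ π s}
  have hevent : ∀ t (ht : t ≤ T), ∀ s ≤ T,
      {ω | min (δ t ω) T ≤ s} = {ω | t ≤ π s ω} := by
    intro t ht s hs
    ext ω
    rw [Set.mem_setOf_eq, Set.mem_setOf_eq, hmin t ht ω]
    exact hiff t ht s hs ω
  constructor
  · refine ⟨?_, ?_, ?_⟩
    · -- δ t is a stopping time for the time-changed filtration
      intro t ht s hs
      rw [show {ω | min (sInf {s' : ℝ≥0 | s' ≤ T ∧ t ≤ π s' ω}) T ≤ s}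
            = {ω | t ≤ π s ω} from hevent t ht s hs]
      rw [pastSigma_eq_stopping F hFle hFmono (π s) (hπstop s hs)]
      intro u
      exact hkey s hs t u
    · intro t ht ω
      exact le_trans (min_le_left _ _) (hδle t ht ω)
    · intro t u htu huT ω
      refine min_le_min ?_ le_rfl
      exact csInf_le_csInf (hbdd t ω) (hSne u huT ω)
        (fun s' hs' => ⟨hs'.1, le_trans htu hs'.2⟩)
  · -- recovery of the original filtration
    intro t ht
    refine le_antisymm ?_ ?_
    · -- pastSigma ≤ F t, using right-continuity
      refine MeasurableSpace.generateFrom_le fun A hA => ?_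
      rw [hFrc t]
      refine MeasurableSpace.measurableSet_iInf.2 fun v => ?_
      refine MeasurableSpace.measurableSet_iInf.2 fun hv => ?_
      rw [Set.mem_Ioi] at hv
      -- we show A ∈ F v for every v > t
      -- countable index: rationals (clamped to [0,T]) together with T
      set g : Option ℚ → ℝ≥0 := fun o => o.elim T (fun q => min (Real.toNNReal q) T) with hg
      have hgT : ∀ i, g i ≤ T := by
        rintro (_ | q)
        · exact le_rfl
        · exact min_le_right _ _
      have hpiece : ∀ i, MeasurableSet[F v]
          (A ∩ {ω | min (δ t ω) T ≤ g i} ∩ {ω | π (g i) ω ≤ v}) := by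
        intro i
        have h1 := hA (g i) (Set.mem_Iic.2 (hgT i))
        rw [pastSigma_eq_stopping F hFle hFmono (π (g i)) (hπstop (g i) (hgT i))] at h1
        exact h1 v
      have hcover : A = ⋃ i, (A ∩ {ω | min (δ t ω) T ≤ g i} ∩ {ω | π (g i) ω ≤ v}) := by
        ext ω
        simp only [Set.mem_iUnion, Set.mem_inter_iff, Set.mem_setOf_eq]
        constructor
        · intro hωA
          have hd : δ t ω ≤ T := hδleT t ht ω
          have hπd : π (δ t ω) ω = t := hπδ t ht ω
          by_cases hTv : π T ω ≤ v
          · exact ⟨none, ⟨hωA, by simpa [hg] using min_le_right (δ t ω) T⟩, hTv⟩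
          · push_neg at hTv
            -- then δ t ω < T, use continuity to find a rational
            have hdT : δ t ω < T := by
              rcases lt_or_eq_of_le hd with h | h
              · exact h
              · exfalso
                rw [h] at hπd
                rw [hπd] at hTv
                exact absurd hv (not_lt_of_gt hTv)
            have hcw : ContinuousWithinAt (fun s => π s ω) (Set.Icc 0 T) (δ t ω) :=
              hπcont ω _ ⟨zero_le, hd⟩
            have hev : (fun s => π s ω) ⁻¹' Set.Iio v ∈ 𝓝[Set.Icc 0 T] (δ t ω) := by
              apply hcw
              apply Iio_mem_nhds
              show π (δ t ω) ω < v
              rw [hπd]; exact hv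
            obtain ⟨U, hUopen, hUmem, hUsub⟩ := mem_nhdsWithin.1 hev
            obtain ⟨b, hb, hIco⟩ := exists_Ico_subset_of_mem_nhds (hUopen.mem_nhds hUmem)
              ⟨T, hdT⟩
            obtain ⟨q, hq1, hq2⟩ := exists_rat_btwn
              (NNReal.coe_lt_coe.2 (lt_min hb hdT : δ t ω < min b T))
            have hq0 : (0:ℝ) ≤ q := le_trans (δ t ω).coe_nonneg (le_of_lt hq1)
            have hqgt : δ t ω < Real.toNNReal q := Real.lt_toNNReal_iff_coe_lt.2 hq1
            have hqlt : Real.toNNReal q < min b T := (Real.toNNReal_lt_iff_lt_coe hq0).2 hq2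
            have hqT : Real.toNNReal q ≤ T := le_of_lt (lt_of_lt_of_le hqlt (min_le_right _ _))
            have hgq : g (some q) = Real.toNNReal q := by
              simp [hg, min_eq_left hqT]
            have hq_in_U : Real.toNNReal q ∈ U :=
              hIco ⟨le_of_lt hqgt, lt_of_lt_of_le hqlt (min_le_left _ _)⟩
            have hq_in_E : π (Real.toNNReal q) ω < v :=
              hUsub ⟨hq_in_U, ⟨zero_le, hqT⟩⟩
            refine ⟨some q, ⟨hωA, ?_⟩, ?_⟩
            · rw [hgq, hmin t ht ω]
              exact le_of_lt hqgt
            · rw [hgq]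
              exact le_of_lt hq_in_E
        · rintro ⟨i, ⟨hωA, _⟩, _⟩
          exact hωA
      rw [hcover]
      exact MeasurableSet.iUnion hpiece
    · -- F t ≤ pastSigma
      intro A hA
      apply MeasurableSpace.measurableSet_generateFrom
      intro s hs
      rw [Set.mem_Iic] at hs
      have : A ∩ {ω | min (δ t ω) T ≤ s} = A ∩ ({ω | t ≤ π s ω}) := by
        rw [hevent t ht s hs]
      rw [this]
      rw [pastSigma_eq_stopping F hFle hFmono (π s) (hπstop s hs)]
      intro u
      rcases le_or_gt t u with htu | hut
      · have : A ∩ {ω | t ≤ π s ω} ∩ {ω | π s ω ≤ u}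
            = A ∩ ({ω | t ≤ π s ω} ∩ {ω | π s ω ≤ u}) := by
          rw [Set.inter_assoc]
        rw [this]
        exact (hFmono htu _ hA).inter (hkey s hs t u)
      · have : A ∩ {ω | t ≤ π s ω} ∩ {ω | π s ω ≤ u} = (∅ : Set Ω) := by
          ext ω
          simp only [Set.mem_inter_iff, Set.mem_setOf_eq, Set.mem_empty_iff_false, iff_false,
            not_and, not_le]
          intro h1
          exact lt_of_lt_of_le hut h1.2
        rw [this]
        exact @MeasurableSet.empty _ (F u)
end
end

section
/- Let (Ω, 𝒢, P) be a probability space, T ∈ (0,∞], I a set, and (𝒜, (𝔽^A)_{A∈𝒜}) an index system on I with filtrations of sub-σ-algebras of 𝒢. Let δ = (δ^A)_{A∈𝒜} be a family of information delays, each δ^A an information delay for 𝔽^A, and let (𝓕^{A,δ}_t) be the recursively defined δ-delayed filtrations. Then the family (𝔽^{A,δ})_{A∈𝒜} agrees with the index system: (i) for every A ∈ 𝒜, (𝓕^{A,δ}_t)_{t∈[0,T]} is a filtration, i.e. 𝓕^{A,δ}_t ⊆ 𝓕^{A,δ}_u whenever t ≤ u; and (ii) for all A, A' ∈ 𝒜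 with A ⊆ A', 𝓕^{A,δ}_t ⊆ 𝓕^{A',δ}_t for all t ∈ [0,T]. -/
open MeasureTheory Set Filter
open scoped ENNReal NNReal

noncomputable section

lemma pastSigma_mono_of_le {Ω : Type*} (F : ℝ≥0∞ → MeasurableSpace Ω) (D : Set ℝ≥0∞)
    (σ τ : Ω → ℝ≥0∞) (hτ : ∀ s ∈ D, MeasurableSet[F s] {ω | τ ω ≤ s})
    (h : ∀ ω, σ ω ≤ τ ω) : pastSigma F D σ ≤ pastSigma F D τ := by
  apply MeasurableSpace.generateFrom_mono
  intro A hA s hs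
  have : A ∩ {ω | τ ω ≤ s} = (A ∩ {ω | σ ω ≤ s}) ∩ {ω | τ ω ≤ s} := by
    ext ω
    simp only [Set.mem_inter_iff, Set.mem_setOf_eq]
    exact ⟨fun ⟨h1, h2⟩ => ⟨⟨h1, le_trans (h ω) h2⟩, h2⟩, fun ⟨⟨h1, _⟩, h2⟩ => ⟨h1, h2⟩⟩
  rw [this]
  exact (hA s hs).inter (hτ s hs)

/-- The family of `δ`-delayed filtrations agrees with the index system:
(i) each `(𝓕^{A,δ}_t)_{t∈[0,T]}` is a filtration, and (ii) it is monotone in `A ∈ 𝒜`. -/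
theorem delayedFiltration_agrees_with_indexSystem
    {Ω I : Type*} [DecidableEq I] [m𝒢 : MeasurableSpace Ω]
    (P : Measure Ω) [IsProbabilityMeasure P]
    (T : ℝ≥0∞) (hT : 0 < T)
    (𝒜 : Set (Finset I)) (h𝒜 : ∀ A₁ ∈ 𝒜, ∀ A₂ ∈ 𝒜, A₁ ∪ A₂ ∈ 𝒜)
    (F : Finset I → ℝ≥0∞ → MeasurableSpace Ω)
    (hFfilt : ∀ A ∈ 𝒜, ∀ s t : ℝ≥0∞, s ≤ t → t ≤ T → F A s ≤ F A t)
    (hFle : ∀ A ∈ 𝒜, ∀ t ≤ T, F A t ≤ m𝒢)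
    (hFmono : ∀ A ∈ 𝒜, ∀ A' ∈ 𝒜, A ⊆ A' → ∀ t ≤ T, F A t ≤ F A' t)
    (δ : Finset I → ℝ≥0∞ → Ω → ℝ≥0∞)
    (hδ : ∀ A ∈ 𝒜, IsInformationDelay (F A) T (δ A)) :
    (∀ A ∈ 𝒜, ∀ t u : ℝ≥0∞, t ≤ u → u ≤ T →
      delayedFiltration F T 𝒜 δ A t ≤ delayedFiltration F T 𝒜 δ A u) ∧
    (∀ A ∈ 𝒜, ∀ A' ∈ 𝒜, A ⊆ A' → ∀ t ≤ T,
      delayedFiltration F T 𝒜 δ A t ≤ delayedFiltration F T 𝒜 δ A' t) := by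
  constructor
  · have main : ∀ n : ℕ, ∀ A, A.card < n → A ∈ 𝒜 → ∀ t u : ℝ≥0∞, t ≤ u → u ≤ T →
        delayedFiltration F T 𝒜 δ A t ≤ delayedFiltration F T 𝒜 δ A u := by
      intro n
      induction n with
      | zero => intro A hc; exact absurd hc (Nat.not_lt_zero _)
      | succ n ih =>
        intro A hc hA t u htu huT
        rw [delayedFiltration, delayedFiltration]
        apply sup_le_sup
        · exact pastSigma_mono_of_le _ _ _ _
            (fun s hs => (hδ A hA).1 u huT s hs) ((hδ A hA).2.2 t u htu huT)
        · refine iSup_mono fun A' => iSup_mono fun hA' => iSup_mono fun hss => ?_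
          exact ih A' (lt_of_lt_of_le (Finset.card_lt_card hss) (Nat.lt_succ_iff.mp hc))
            hA' t u htu huT
    exact fun A hA => main (A.card + 1) A (Nat.lt_succ_self _) hA
  · intro A hA A' hA' hsub t htT
    rcases hsub.ssubset_or_eq with hss | rfl
    · conv_rhs => rw [delayedFiltration]
      refine le_trans ?_ le_sup_right
      exact le_iSup_of_le A (le_iSup_of_le hA (le_iSup_of_le hss le_rfl))
    · exact le_rfl
end
end

section
/- Let 𝔽 = (𝓕_t)_{t∈ℝ₊} be a right-continuous filtration (𝓕_t = ⋂_{u>t} 𝓕_u) of sub-σ-algebras of 𝒢 on a probability space (Ω, 𝒢, P), and let T ∈ (0,∞). Let π = (π(s))_{s∈[0,T]} be an order execution delay for 𝔽 (each π(s) an 𝔽-stopping time, s ≤ π(s,ω) for all s, ω, and π(s,ω) ≤ π(u,ω) for s ≤ u) that is pathwise continuous. Define the time-changed filtration 𝓕̃_s := 𝓕_{π(s)} (the σ-field of the π(s)-past) for s ∈ [0,T], and δ(t,ω) := min( inf{s ∈ [0,T] : π(s,ω) ≥ t}, T ) for t ∈ [0,T]. Then δ is an information delay for 𝔽̃ = (𝓕̃_s)_{s∈[0,T]}: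 for every t ∈ [0,T], {δ(t) ≤ s} ∈ 𝓕̃_s for all s ∈ [0,T], 0 ≤ δ(t,ω) ≤ t for all ω, and δ(t,ω) ≤ δ(u,ω) whenever t ≤ u. -/
open MeasureTheory Set Filter
open scoped ENNReal NNReal

noncomputable section

/-- Let `𝔽 = (𝓕_u)_{u∈ℝ₊}` be right-continuous and `π` a pathwise
continuous order execution delay for `𝔽`.  With `𝓕̃_s := 𝓕_{π(s)}` (σ-field of the
`π(s)`-past) and `δ(t,ω) := min(inf {s ∈ [0,T] : π(s,ω) ≥ t}, T)`, the process `δ` is an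
information delay for `𝔽̃`: each `δ(t)` is an `𝔽̃`-stopping time, `0 ≤ δ(t) ≤ t`, and
`δ` is pathwise monotone. -/
theorem timeChange_gives_informationDelay
    {Ω : Type*} [m𝒢 : MeasurableSpace Ω] (P : Measure Ω) [IsProbabilityMeasure P]
    (F : ℝ≥0 → MeasurableSpace Ω)
    (hFle : ∀ u, F u ≤ m𝒢) (hFmono : Monotone F)
    (hFrc : ∀ u : ℝ≥0, F u = ⨅ v ∈ Set.Ioi u, F v)
    (T : ℝ≥0) (hT : 0 < T)
    (π : ℝ≥0 → Ω → ℝ≥0)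
    (hπstop : ∀ s ≤ T, ∀ u : ℝ≥0, MeasurableSet[F u] {ω | π s ω ≤ u})
    (hπge : ∀ s ≤ T, ∀ ω, s ≤ π s ω)
    (hπmono : ∀ s u : ℝ≥0, s ≤ u → u ≤ T → ∀ ω, π s ω ≤ π u ω)
    (hπcont : ∀ ω, ContinuousOn (fun s => π s ω) (Set.Icc 0 T)) :
    (∀ t ≤ T, ∀ s ≤ T, MeasurableSet[pastSigma F Set.univ (π s)]
      {ω | min (sInf {s' : ℝ≥0 | s' ≤ T ∧ t ≤ π s' ω}) T ≤ s}) ∧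
    (∀ t ≤ T, ∀ ω, min (sInf {s' : ℝ≥0 | s' ≤ T ∧ t ≤ π s' ω}) T ≤ t) ∧
    (∀ t u : ℝ≥0, t ≤ u → u ≤ T → ∀ ω,
      min (sInf {s' : ℝ≥0 | s' ≤ T ∧ t ≤ π s' ω}) T ≤
        min (sInf {s' : ℝ≥0 | s' ≤ T ∧ u ≤ π s' ω}) T) := by
  -- `T` always belongs to the hitting set when `t ≤ T`.
  have hTmem : ∀ t : ℝ≥0, t ≤ T → ∀ ω, T ∈ {s' : ℝ≥0 | s' ≤ T ∧ t ≤ π s' ω} := by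
    intro t ht ω
    exact ⟨le_rfl, ht.trans (hπge T le_rfl ω)⟩
  -- Key equivalence: `δ(t)(ω) ≤ s ↔ t ≤ π s ω` for `t, s ≤ T`.
  have key : ∀ t : ℝ≥0, t ≤ T → ∀ s : ℝ≥0, s ≤ T → ∀ ω : Ω,
      min (sInf {s' : ℝ≥0 | s' ≤ T ∧ t ≤ π s' ω}) T ≤ s ↔ t ≤ π s ω := by
    intro t ht s hs ω
    set S : Set ℝ≥0 := {s' : ℝ≥0 | s' ≤ T ∧ t ≤ π s' ω} with hS
    have hTS : T ∈ S := hTmem t ht ω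
    have hne : S.Nonempty := ⟨T, hTS⟩
    have hbdd : BddBelow S := OrderBot.bddBelow S
    have hInfT : sInf S ≤ T := csInf_le hbdd hTS
    have hmin : min (sInf S) T = sInf S := min_eq_left hInfT
    constructor
    · intro h
      rw [hmin] at h
      -- `S` is closed, hence contains its infimum.
      have hclosed : IsClosed S := by
        have hSeq : S = Set.Icc 0 T ∩ (fun s' => π s' ω) ⁻¹' Set.Ici t := by
          ext s'
          simp only [hS, Set.mem_setOf_eq, Set.mem_inter_iff, Set.mem_Icc, Set.mem_preimage,
            Set.mem_Ici]
          exact ⟨fun ⟨h1, h2⟩ => ⟨⟨zero_le, h1⟩, h2⟩, fun ⟨⟨_, h1⟩, h2⟩ => ⟨h1, h2⟩⟩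
        rw [hSeq]
        exact (hπcont ω).preimage_isClosed_of_isClosed isClosed_Icc isClosed_Ici
      have hmem : sInf S ∈ S := hclosed.csInf_mem hne hbdd
      exact hmem.2.trans (hπmono _ s h hs ω)
    · intro h
      rw [hmin]
      exact csInf_le hbdd ⟨hs, h⟩
  refine ⟨?_, ?_, ?_⟩
  · -- stopping time property
    intro t ht s hs
    have hset : {ω | min (sInf {s' : ℝ≥0 | s' ≤ T ∧ t ≤ π s' ω}) T ≤ s}
        = {ω | t ≤ π s ω} := by
      ext ω; exact key t ht s hs ω
    rw [hset]
    apply MeasurableSpace.measurableSet_generateFrom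
    intro u _
    by_cases hu : u < t
    · have : {ω | t ≤ π s ω} ∩ {ω | π s ω ≤ u} = ∅ := by
        ext ω
        simp only [Set.mem_inter_iff, Set.mem_setOf_eq, Set.mem_empty_iff_false, iff_false,
          not_and]
        intro h1 h2
        exact absurd (h1.trans h2) (not_le.2 hu)
      rw [this]
      exact @MeasurableSet.empty Ω (F u)
    · push_neg at hu
      have hlt : {ω | π s ω < t} =
          ⋃ q : {q : ℚ // 0 ≤ q ∧ Real.toNNReal q < t}, {ω | π s ω ≤ Real.toNNReal q} := by
        ext ω
        simp only [Set.mem_setOf_eq, Set.mem_iUnion]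
        constructor
        · intro h
          obtain ⟨q, hq0, hq1, hq2⟩ := (NNReal.lt_iff_exists_rat_btwn _ _).1 h
          exact ⟨⟨q, hq0, hq2⟩, hq1.le⟩
        · rintro ⟨⟨q, hq0, hq2⟩, hq⟩
          exact lt_of_le_of_lt hq hq2
      have hltmeas : MeasurableSet[F u] {ω | π s ω < t} := by
        rw [hlt]
        refine MeasurableSet.iUnion fun q => ?_
        exact hFmono (q.2.2.le.trans hu) _ (hπstop s hs _)
      have : {ω | t ≤ π s ω} ∩ {ω | π s ω ≤ u}
          = {ω | π s ω ≤ u} \ {ω | π s ω < t} := by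
        ext ω
        simp only [Set.mem_inter_iff, Set.mem_setOf_eq, Set.mem_diff, not_lt]
        tauto
      rw [this]
      exact (hπstop s hs u).diff hltmeas
  · -- `δ(t) ≤ t`
    intro t ht ω
    exact min_le_of_left_le (csInf_le (OrderBot.bddBelow _) ⟨ht, hπge t ht ω⟩)
  · -- monotonicity
    intro t u htu hu ω
    refine min_le_min ?_ le_rfl
    refine csInf_le_csInf (OrderBot.bddBelow _) ⟨T, hTmem u hu ω⟩ ?_
    rintro s' ⟨h1, h2⟩
    exact ⟨h1, htu.trans h2⟩

end
end

section
/- Let (Ω, 𝒢, P) be a probability space and 𝕀̃ = (𝕀̃_u)_{u∈ℝ₊} a filtration. Let T ∈ (0,∞). Let π = (π(s))_{s∈ℝ₊} be pathwise continuous, pathwise monotone nondecreasing, with s ≤ π(s,ω) for all s ∈ ℝ₊ and ω, and with each π(s) an 𝕀̃-stopping time; let π̃ = (π̃(t))_{t∈[0,T]} be pathwise monotone nondecreasing with t ≤ π̃(t,ω), each π̃(t) an 𝕀̃-stopping time; and assume π(t,ω) ≤ π̃(t,ω) for all t ∈ [0,T] and ω. Define π̂(t,ω) := inf{s ∈ ℝ₊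 : π(s,ω) ≥ π̃(t,ω)}. Then: (i) π(π̂(t,ω),ω) = π̃(t,ω) for all t, ω, so that for any process S the π̃-delayed value equals the π̂-delay of the π-delayed process: S_{π(π̂(t))} = S_{π̃(t)}; (ii) π̂ is pathwise monotone: π̂(t,ω) ≤ π̂(u,ω) for t ≤ u; (iii) for all t ∈ [0,T] and u ∈ ℝ₊, {π̂(t) ≤ u} = {π̃(t) ≤ π(u)} ∈ 𝕀̃_{π(u)}, the σ-field of the π(u)-past; (iv) if in addition π is pathwise strictly monotone (π(s,ω) < π(u,ω) for s < u), then t ≤ π̂(t,ω) for all t, ω. Consequently π̂ is an order execution delay for the time-changed filtration (𝕀̃_{π(t)})_{t∈ℝ₊}. -/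
open MeasureTheory Set Filter Topology
open scoped ENNReal NNReal

noncomputable section

/-- Superimposing a slower execution delay `π̃` on a faster pathwise
continuous one `π`: with `π̂(t,ω) := inf {s : π(s,ω) ≥ π̃(t,ω)}` we have
(i) `π(π̂(t)) = π̃(t)` (so `S_{π(π̂(t))} = S_{π̃(t)}` for any process `S`);
(ii) `π̂` is pathwise monotone;
(iii) `{π̂(t) ≤ u} = {π̃(t) ≤ π(u)}` belongs to `𝕀̃_{π(u)}`, the σ-field of the
`π(u)`-past; and
(iv) if `π` is pathwise strictly monotone then `t ≤ π̂(t)`.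
Consequently `π̂` is an order execution delay for the time-changed filtration
`(𝕀̃_{π(t)})_{t∈ℝ₊}`. -/
theorem superimposed_executionDelay
    {Ω : Type*} [m𝒢 : MeasurableSpace Ω] (P : Measure Ω) [IsProbabilityMeasure P]
    (𝕀t : ℝ≥0 → MeasurableSpace Ω) (h𝕀le : ∀ u, 𝕀t u ≤ m𝒢) (h𝕀mono : Monotone 𝕀t)
    (T : ℝ≥0) (hT : 0 < T)
    (π : ℝ≥0 → Ω → ℝ≥0)
    (hπcont : ∀ ω, Continuous fun s => π s ω)
    (hπmono : ∀ ω, Monotone fun s => π s ω)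
    (hπge : ∀ s ω, s ≤ π s ω)
    (hπstop : ∀ s, ∀ u : ℝ≥0, MeasurableSet[𝕀t u] {ω | π s ω ≤ u})
    (πt : ℝ≥0 → Ω → ℝ≥0)
    (hπtmono : ∀ t u : ℝ≥0, t ≤ u → u ≤ T → ∀ ω, πt t ω ≤ πt u ω)
    (hπtge : ∀ t ≤ T, ∀ ω, t ≤ πt t ω)
    (hπtstop : ∀ t ≤ T, ∀ u : ℝ≥0, MeasurableSet[𝕀t u] {ω | πt t ω ≤ u})
    (hle : ∀ t ≤ T, ∀ ω, π t ω ≤ πt t ω) :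
    (∀ t ≤ T, ∀ ω, π (sInf {s : ℝ≥0 | πt t ω ≤ π s ω}) ω = πt t ω) ∧
    (∀ t u : ℝ≥0, t ≤ u → u ≤ T → ∀ ω,
      sInf {s : ℝ≥0 | πt t ω ≤ π s ω} ≤ sInf {s : ℝ≥0 | πt u ω ≤ π s ω}) ∧
    (∀ t ≤ T, ∀ u : ℝ≥0,
      {ω | sInf {s : ℝ≥0 | πt t ω ≤ π s ω} ≤ u} = {ω | πt t ω ≤ π u ω} ∧
      MeasurableSet[pastSigma 𝕀t Set.univ (π u)]
        {ω | sInf {s : ℝ≥0 | πt t ω ≤ π s ω} ≤ u}) ∧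
    ((∀ ω, StrictMono fun s => π s ω) →
      ∀ t ≤ T, ∀ ω, t ≤ sInf {s : ℝ≥0 | πt t ω ≤ π s ω}) := by
  classical
  -- basic facts about the set A(t, ω)
  have hne : ∀ t ω, {s : ℝ≥0 | πt t ω ≤ π s ω}.Nonempty := fun t ω =>
    ⟨πt t ω, hπge _ ω⟩
  have hclosed : ∀ t ω, IsClosed {s : ℝ≥0 | πt t ω ≤ π s ω} := fun t ω =>
    isClosed_Ici.preimage (hπcont ω)
  have hmem : ∀ t ω, sInf {s : ℝ≥0 | πt t ω ≤ π s ω} ∈ {s : ℝ≥0 | πt t ω ≤ π s ω} :=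
    fun t ω => (hclosed t ω).csInf_mem (hne t ω) (OrderBot.bddBelow _)
  -- (i)
  have hi : ∀ t ≤ T, ∀ ω, π (sInf {s : ℝ≥0 | πt t ω ≤ π s ω}) ω = πt t ω := by
    intro t ht ω
    set a := sInf {s : ℝ≥0 | πt t ω ≤ π s ω} with ha
    refine le_antisymm ?_ (hmem t ω)
    rcases eq_or_lt_of_le (zero_le : 0 ≤ a) with h0 | h0
    · calc π a ω ≤ π t ω := hπmono ω (h0 ▸ (zero_le : 0 ≤ t))
        _ ≤ πt t ω := hle t ht ω
    · have hlt : ∀ s < a, π s ω ≤ πt t ω := by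
        intro s hs
        by_contra hcon
        have : a ≤ s := csInf_le (OrderBot.bddBelow _)
          (show s ∈ {s : ℝ≥0 | πt t ω ≤ π s ω} from le_of_not_ge hcon)
        exact absurd this (not_le.2 hs)
      haveI hnb : (𝓝[<] a).NeBot := nhdsWithin_Iio_self_neBot' ⟨0, h0⟩
      have htd : Tendsto (fun s => π s ω) (𝓝[<] a) (𝓝 (π a ω)) :=
        ((hπcont ω).tendsto a).mono_left nhdsWithin_le_nhds
      exact le_of_tendsto htd (eventually_nhdsWithin_of_forall hlt)
  -- (ii)
  have hii : ∀ t u : ℝ≥0, t ≤ u → u ≤ T → ∀ ω,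
      sInf {s : ℝ≥0 | πt t ω ≤ π s ω} ≤ sInf {s : ℝ≥0 | πt u ω ≤ π s ω} := by
    intro t u htu huT ω
    refine csInf_le_csInf (OrderBot.bddBelow _) (hne u ω) fun s hs => ?_
    exact le_trans (hπtmono t u htu huT ω) hs
  refine ⟨hi, hii, ?_, ?_⟩
  · -- (iii)
    intro t ht u
    have heq : {ω | sInf {s : ℝ≥0 | πt t ω ≤ π s ω} ≤ u} = {ω | πt t ω ≤ π u ω} := by
      ext ω
      simp only [mem_setOf_eq]
      constructor
      · intro h
        calc πt t ω = π (sInf {s : ℝ≥0 | πt t ω ≤ π s ω}) ω := (hi t ht ω).symm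
          _ ≤ π u ω := hπmono ω h
      · intro h
        exact csInf_le (OrderBot.bddBelow _) h
    refine ⟨heq, ?_⟩
    rw [heq]
    -- use mathlib's stopping-time machinery
    let F : Filtration ℝ≥0 m𝒢 := ⟨𝕀t, h𝕀mono, h𝕀le⟩
    have hc : ∀ a b : ℝ≥0, ((a : WithTop ℝ≥0) ≤ (b : WithTop ℝ≥0)) = (a ≤ b) :=
      fun a b => propext WithTop.coe_le_coe
    have hσ : IsStoppingTime F (fun ω => (π u ω : WithTop ℝ≥0)) := fun i => by
      simpa only [hc] using hπstop u i
    have hτ : IsStoppingTime F (fun ω => (πt t ω : WithTop ℝ≥0)) := fun i => by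
      simpa only [hc] using hπtstop t ht i
    have hms : MeasurableSet[hσ.measurableSpace]
        {ω | (πt t ω : WithTop ℝ≥0) ≤ (π u ω : WithTop ℝ≥0)} :=
      IsStoppingTime.measurableSet_stopping_time_le hτ hσ
    refine MeasurableSpace.measurableSet_generateFrom ?_
    intro s _
    simpa only [hc] using hms.2 s
  · -- (iv)
    intro hstrict t ht ω
    refine le_csInf (hne t ω) fun s hs => ?_
    by_contra hcon
    have h1 : π s ω < π t ω := hstrict ω (lt_of_not_ge hcon)
    exact absurd hs (not_le.2 (lt_of_lt_of_le h1 (hle t ht ω)))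
end
end

section
/- Let 𝔽 = (𝓕_u)_{u∈ℝ₊} be a filtration on a measurable space (Ω, 𝒢), let t ∈ ℝ₊, n ∈ ℕ, and let σ_1, …, σ_n be 𝔽-stopping times such that σ_i(ω) ≤ t for all i and all ω ∈ Ω, and such that for every ω ∈ Ω there exists some i ∈ {1,…,n} with σ_i(ω) = t. Then σ(⋃_{i=1}^n 𝓕_{σ_i}) = 𝓕_t, where 𝓕_{σ_i} denotes the σ-field of the σ_i-past. -/
open MeasureTheory Set Filter
open scoped ENNReal NNReal

noncomputable section

/-- If `σ_1, …, σ_n` are `𝔽`-stopping times bounded above by `t` such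
that for every `ω` some `σ_i(ω)` equals `t`, then `σ(⋃_i 𝓕_{σ_i}) = 𝓕_t`. -/
theorem iSup_pastSigma_eq
    {Ω : Type*} [m𝒢 : MeasurableSpace Ω]
    (F : ℝ≥0 → MeasurableSpace Ω) (hFmono : Monotone F) (hFle : ∀ u, F u ≤ m𝒢)
    (t : ℝ≥0) (n : ℕ) (σs : Fin n → Ω → ℝ≥0)
    (hstop : ∀ i, ∀ u : ℝ≥0, MeasurableSet[F u] {ω | σs i ω ≤ u})
    (hle : ∀ i ω, σs i ω ≤ t)
    (hcover : ∀ ω, ∃ i, σs i ω = t) :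
    (⨆ i, pastSigma F Set.univ (σs i)) = F t := by
  -- `{σ_i < t}` is `F t`-measurable (countable union over rationals below `t`).
  have hlt : ∀ i, MeasurableSet[F t] {ω | σs i ω < t} := by
    intro i
    have heq : {ω | σs i ω < t} =
        ⋃ (q : ℚ) (_ : 0 ≤ q ∧ Real.toNNReal q < t), {ω | σs i ω ≤ Real.toNNReal q} := by
      ext ω
      simp only [Set.mem_setOf_eq, Set.mem_iUnion]
      constructor
      · intro h
        obtain ⟨q, hq1, hq2⟩ := exists_rat_btwn (show (σs i ω : ℝ) < (t : ℝ) from h)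
        have hq0 : (0 : ℝ) ≤ q := le_trans (σs i ω).2 hq1.le
        refine ⟨q, ⟨by exact_mod_cast hq0, ?_⟩, ?_⟩
        · rw [← Real.toNNReal_coe (r := t), Real.toNNReal_lt_toNNReal_iff_of_nonneg hq0]
          exact hq2
        · rw [← Real.toNNReal_coe (r := σs i ω)]
          exact Real.toNNReal_mono hq1.le
      · rintro ⟨q, ⟨_, hqt⟩, hq⟩
        exact lt_of_le_of_lt hq hqt
    rw [heq]
    refine MeasurableSet.iUnion fun q => MeasurableSet.iUnion fun hq =>
      hFmono hq.2.le _ (hstop i _)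
  refine le_antisymm (iSup_le fun i => ?_) ?_
  · -- each past σ-field is contained in `F t`
    refine MeasurableSpace.generateFrom_le fun A hA => ?_
    have h := hA t (Set.mem_univ t)
    have hAe : A ∩ {ω | σs i ω ≤ t} = A := by
      ext ω; simp [hle i ω]
    rwa [hAe] at h
  · -- `F t ≤ ⨆ i`
    intro A hA
    have hB : ∀ i, MeasurableSet[⨆ i, pastSigma F Set.univ (σs i)]
        (A ∩ {ω | t ≤ σs i ω}) := by
      intro i
      refine (le_iSup (fun i => pastSigma F Set.univ (σs i)) i) _ ?_
      refine MeasurableSpace.measurableSet_generateFrom ?_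
      intro s _
      by_cases hst : t ≤ s
      · have he : A ∩ {ω | t ≤ σs i ω} ∩ {ω | σs i ω ≤ s} = A ∩ {ω | t ≤ σs i ω} := by
          ext ω
          simp only [Set.mem_inter_iff, Set.mem_setOf_eq, and_iff_left_iff_imp]
          exact fun _ => le_trans (hle i ω) hst
        rw [he]
        exact hFmono hst _ (hA.inter (by
          have : {ω | t ≤ σs i ω} = {ω | σs i ω < t}ᶜ := by
            ext ω; simp [not_lt]
          rw [this]; exact (hlt i).compl))
      · have he : A ∩ {ω | t ≤ σs i ω} ∩ {ω | σs i ω ≤ s} = ∅ := by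
          ext ω
          simp only [Set.mem_inter_iff, Set.mem_setOf_eq, Set.mem_empty_iff_false, iff_false,
            not_and]
          rintro ⟨_, h1⟩ h2
          exact hst (le_trans h1 h2)
        rw [he]
        exact @MeasurableSet.empty Ω (F s)
    have hAe : A = ⋃ i, A ∩ {ω | t ≤ σs i ω} := by
      ext ω
      simp only [Set.mem_iUnion, Set.mem_inter_iff, Set.mem_setOf_eq]
      constructor
      · intro hω
        obtain ⟨i, hi⟩ := hcover ω
        exact ⟨i, hω, hi.ge⟩
      · rintro ⟨i, hω, _⟩; exact hω
    rw [hAe]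
    exact MeasurableSet.iUnion hB
end
end

section
/- Let (Ω, 𝒢, P) be a probability space, 𝔾 = (𝓖_u)_{u∈ℝ₊} a filtration, and I an index set. For each a ∈ I let S^a : ℝ₊ × Ω → ℝ be progressively measurable with respect to 𝔾, and let π^a = (π^a(t))_{t∈[0,T]} be an order execution delay with ℝ₊-valued π^a(t) that are 𝔾-stopping times. Define 𝓖^π_t := σ(⋃_{b∈I} 𝓖_{π^b(t)}) for t ∈ [0,T], and assume each π^a is progressively measurable with respect to 𝔾^π = (𝓖^π_t), i.e. for every t ∈ [0,T] the map (u,ω) ↦ π^a(u,ω) restricted to [0,t] × Ω is 𝓑([0,t]) ⊗ 𝓖^π_t-measurable. Then for every a ∈ I the delayed process S^{a,π} : (t,ω) ↦ S^a(π^a(t,ω), ω) is progressively measurable with respect to 𝔾^π. -/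
open MeasureTheory Set Filter
open scoped ENNReal NNReal

noncomputable section

/-- Progressive measurability of `S` with respect to the family of σ-algebras `G`:
for each `t`, the restriction of `S` to `[0,t] × Ω` is `ℬ([0,t]) ⊗ G t`-measurable. -/
def ProgMeasurableOn {Ω ι E : Type*} [MeasurableSpace ι] [Preorder ι] [MeasurableSpace E]
    (G : ι → MeasurableSpace Ω) (S : ι → Ω → E) : Prop :=
  ∀ t : ι, Measurable[MeasurableSpace.prod Subtype.instMeasurableSpace (G t)]
    (fun p : Set.Iic t × Ω => S (↑p.1) p.2)

namespace DelayAux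

variable {Ω : Type*}

lemma mem_pastSigma (G : ℝ≥0 → MeasurableSpace Ω) (τ : Ω → ℝ≥0) {A : Set Ω}
    (h : ∀ s, MeasurableSet[G s] (A ∩ {ω | τ ω ≤ s})) :
    MeasurableSet[pastSigma G Set.univ τ] A :=
  MeasurableSpace.measurableSet_generateFrom (fun s _ => h s)

lemma tauLe_mem (G : ℝ≥0 → MeasurableSpace Ω) (hGmono : Monotone G) (τ : Ω → ℝ≥0)
    (hτ : ∀ s, MeasurableSet[G s] {ω | τ ω ≤ s}) (c : ℝ≥0) :
    MeasurableSet[pastSigma G Set.univ τ] {ω | τ ω ≤ c} := by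
  apply mem_pastSigma
  intro s
  have h : {ω | τ ω ≤ c} ∩ {ω | τ ω ≤ s} = {ω | τ ω ≤ c ⊓ s} := by
    ext ω; simp [le_inf_iff, Set.mem_setOf_eq, and_comm]
  rw [h]
  exact hGmono inf_le_right _ (hτ (c ⊓ s))

lemma tau_measurable (G : ℝ≥0 → MeasurableSpace Ω) (hGmono : Monotone G) (τ : Ω → ℝ≥0)
    (hτ : ∀ s, MeasurableSet[G s] {ω | τ ω ≤ s}) :
    Measurable[pastSigma G Set.univ τ] τ := by
  letI : MeasurableSpace Ω := pastSigma G Set.univ τ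
  exact measurable_of_Iic fun c => tauLe_mem G hGmono τ hτ c

lemma inter_lt_mem (G : ℝ≥0 → MeasurableSpace Ω) (hGmono : Monotone G) (τ : Ω → ℝ≥0)
    (hτ : ∀ s, MeasurableSet[G s] {ω | τ ω ≤ s}) (c : ℝ≥0) {F : Set Ω}
    (hF : MeasurableSet[G c] F) :
    MeasurableSet[pastSigma G Set.univ τ] (F ∩ {ω | c < τ ω}) := by
  apply mem_pastSigma
  intro s
  by_cases hsc : s ≤ c
  · have h : (F ∩ {ω | c < τ ω}) ∩ {ω | τ ω ≤ s} = ∅ := by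
      ext ω
      simp only [Set.mem_inter_iff, Set.mem_setOf_eq, Set.mem_empty_iff_false, iff_false,
        not_and]
      rintro ⟨-, h1⟩ h2
      exact absurd (h2.trans hsc) (not_le.mpr h1)
    rw [h]
    exact @MeasurableSet.empty _ (G s)
  · push_neg at hsc
    have h : (F ∩ {ω | c < τ ω}) ∩ {ω | τ ω ≤ s} = (F ∩ {ω | τ ω ≤ c}ᶜ) ∩ {ω | τ ω ≤ s} := by
      ext ω; simp [Set.mem_compl_iff, not_le]
    rw [h]
    exact ((hGmono hsc.le _ hF).inter ((hGmono hsc.le _ (hτ c)).compl)).inter (hτ s)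

lemma stoppedCap_measurable (G : ℝ≥0 → MeasurableSpace Ω) (hGmono : Monotone G)
    (S : ℝ≥0 → Ω → ℝ) (hS : ProgMeasurableOn G S) (τ : Ω → ℝ≥0)
    (hτ : ∀ s, MeasurableSet[G s] {ω | τ ω ≤ s}) (s : ℝ≥0) :
    Measurable[G s] (fun ω => S (τ ω ⊓ s) ω) := by
  letI : MeasurableSpace Ω := G s
  have hτs : Measurable (fun ω => τ ω ⊓ s) := by
    apply measurable_of_Iic
    intro u
    by_cases hsu : s ≤ u
    · have h : (fun ω => τ ω ⊓ s) ⁻¹' Set.Iic u = Set.univ := by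
        ext ω
        simp only [Set.mem_preimage, Set.mem_Iic, Set.mem_univ, iff_true]
        exact le_trans inf_le_right hsu
      rw [h]; exact MeasurableSet.univ
    · push_neg at hsu
      have h : (fun ω => τ ω ⊓ s) ⁻¹' Set.Iic u = {ω | τ ω ≤ u} := by
        ext ω
        simp only [Set.mem_preimage, Set.mem_Iic, Set.mem_setOf_eq, inf_le_iff]
        exact ⟨fun h => h.resolve_right (not_le.mpr hsu), fun h => Or.inl h⟩
      rw [h]
      exact hGmono hsu.le _ (hτ u)
  have hpair : Measurable (fun ω => ((⟨τ ω ⊓ s, Set.mem_Iic.mpr inf_le_right⟩ : Set.Iic s), ω)) :=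
    (hτs.subtype_mk).prodMk measurable_id
  exact (hS s).comp hpair

lemma stopped_measurable (G : ℝ≥0 → MeasurableSpace Ω) (hGmono : Monotone G)
    (S : ℝ≥0 → Ω → ℝ) (hS : ProgMeasurableOn G S) (τ : Ω → ℝ≥0)
    (hτ : ∀ s, MeasurableSet[G s] {ω | τ ω ≤ s}) :
    Measurable[pastSigma G Set.univ τ] (fun ω => S (τ ω) ω) := by
  intro B hB
  apply mem_pastSigma
  intro s
  have heq : ((fun ω => S (τ ω) ω) ⁻¹' B) ∩ {ω | τ ω ≤ s}
      = ((fun ω => S (τ ω ⊓ s) ω) ⁻¹' B) ∩ {ω | τ ω ≤ s} := by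
    ext ω
    simp only [Set.mem_inter_iff, Set.mem_preimage, Set.mem_setOf_eq]
    constructor
    · rintro ⟨h1, h2⟩; rw [inf_eq_left.mpr h2]; exact ⟨h1, h2⟩
    · rintro ⟨h1, h2⟩; rw [inf_eq_left.mpr h2] at h1; exact ⟨h1, h2⟩
  rw [heq]
  exact (stoppedCap_measurable G hGmono S hS τ hτ s hB).inter (hτ s)

lemma cap_set_measurable (G : ℝ≥0 → MeasurableSpace Ω) (S : ℝ≥0 → Ω → ℝ)
    (hS : ProgMeasurableOn G S) (c : ℝ≥0) {B : Set ℝ} (hB : MeasurableSet B) :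
    MeasurableSet[MeasurableSpace.prod inferInstance (G c)]
      ({p : ℝ≥0 × Ω | p.1 ≤ c} ∩ ((fun p : ℝ≥0 × Ω => S (p.1 ⊓ c) p.2) ⁻¹' B)) := by
  letI : MeasurableSpace Ω := G c
  have h1 : MeasurableSet {p : ℝ≥0 × Ω | p.1 ≤ c} := measurable_fst measurableSet_Iic
  have h2 : Measurable (fun p : ℝ≥0 × Ω => S (p.1 ⊓ c) p.2) := by
    have hm : Measurable (fun p : ℝ≥0 × Ω => ((⟨p.1 ⊓ c, Set.mem_Iic.mpr inf_le_right⟩ : Set.Iic c), p.2)) :=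
      ((measurable_fst.min measurable_const).subtype_mk).prodMk measurable_snd
    exact (hS c).comp hm
  exact h1.inter (h2 hB)

lemma prod_inter_transfer {α : Type*} (mα : MeasurableSpace α) (m₁ m₂ : MeasurableSpace Ω)
    (Tq : Set Ω) (hTq : MeasurableSet[m₂] Tq)
    (h : ∀ F, MeasurableSet[m₁] F → MeasurableSet[m₂] (F ∩ Tq)) :
    ∀ E, MeasurableSet[mα.prod m₁] E → MeasurableSet[mα.prod m₂] (E ∩ (Set.univ ×ˢ Tq)) := by
  have hU : MeasurableSet[mα.prod m₂] (Set.univ ×ˢ Tq) :=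
    @MeasurableSet.prod _ _ mα m₂ _ _ MeasurableSet.univ hTq
  let mC : MeasurableSpace (α × Ω) :=
    { MeasurableSet' := fun E => MeasurableSet[mα.prod m₂] (E ∩ (Set.univ ×ˢ Tq))
      measurableSet_empty := by
        simpa using (MeasurableSet.empty : MeasurableSet[mα.prod m₂] ∅)
      measurableSet_compl := fun E hE => by
        have hd : Eᶜ ∩ (Set.univ ×ˢ Tq) = (Set.univ ×ˢ Tq) \ (E ∩ (Set.univ ×ˢ Tq)) := by
          ext p; by_cases hp : p ∈ E <;> simp [hp]
        show MeasurableSet[mα.prod m₂] _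
        rw [hd]
        exact hU.diff hE
      measurableSet_iUnion := fun f hf => by
        show MeasurableSet[mα.prod m₂] _
        rw [Set.iUnion_inter]
        exact MeasurableSet.iUnion hf }
  have hle : mα.prod m₁ ≤ mC := by
    apply sup_le
    · rw [MeasurableSpace.le_def]
      rintro E ⟨s, hs, rfl⟩
      show MeasurableSet[mα.prod m₂] _
      have he : (Prod.fst : α × Ω → α) ⁻¹' s ∩ ((Set.univ : Set α) ×ˢ Tq) = s ×ˢ Tq := by
        ext p; simp [Set.mem_prod, and_comm]
      rw [he]
      exact @MeasurableSet.prod _ _ mα m₂ _ _ hs hTq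
    · rw [MeasurableSpace.le_def]
      rintro E ⟨F, hF, rfl⟩
      show MeasurableSet[mα.prod m₂] _
      have he : (Prod.snd : α × Ω → Ω) ⁻¹' F ∩ ((Set.univ : Set α) ×ˢ Tq) = (Set.univ : Set α) ×ˢ (F ∩ Tq) := by
        ext p; simp [Set.mem_prod]
      rw [he]
      exact @MeasurableSet.prod _ _ mα m₂ _ _ MeasurableSet.univ (h F hF)
  exact fun E hE => hle E hE

lemma stoppedJoint_measurable (G : ℝ≥0 → MeasurableSpace Ω) (hGmono : Monotone G)
    (S : ℝ≥0 → Ω → ℝ) (hS : ProgMeasurableOn G S) (τ : Ω → ℝ≥0)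
    (hτ : ∀ s, MeasurableSet[G s] {ω | τ ω ≤ s}) :
    Measurable[MeasurableSpace.prod inferInstance (pastSigma G Set.univ τ)]
      (fun p : ℝ≥0 × Ω => S (p.1 ⊓ τ p.2) p.2) := by
  letI : MeasurableSpace Ω := pastSigma G Set.univ τ
  intro B hB
  have hset : (fun p : ℝ≥0 × Ω => S (p.1 ⊓ τ p.2) p.2) ⁻¹' B =
      ({p : ℝ≥0 × Ω | τ p.2 ≤ p.1} ∩ (Set.univ ×ˢ ((fun ω => S (τ ω) ω) ⁻¹' B))) ∪
      ⋃ q : ℚ, (({p : ℝ≥0 × Ω | p.1 ≤ Real.toNNReal q} ∩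
          ((fun p : ℝ≥0 × Ω => S (p.1 ⊓ Real.toNNReal q) p.2) ⁻¹' B)) ∩
        (Set.univ ×ˢ {ω | Real.toNNReal q < τ ω})) := by
    ext ⟨v, ω⟩
    simp only [Set.mem_preimage, Set.mem_union, Set.mem_iUnion, Set.mem_inter_iff,
      Set.mem_setOf_eq, Set.mem_prod, Set.mem_univ, true_and]
    constructor
    · intro hvB
      rcases le_or_gt (τ ω) v with h | h
      · exact Or.inl ⟨h, by rwa [inf_eq_right.mpr h] at hvB⟩
      · obtain ⟨q, hq1, hq2⟩ :=
          exists_rat_btwn (show (v : ℝ) < (τ ω : ℝ) from NNReal.coe_lt_coe.mpr h)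
        have hq0 : (0:ℝ) ≤ (q:ℝ) := le_trans v.coe_nonneg hq1.le
        have h1 : v ≤ Real.toNNReal q := (Real.le_toNNReal_iff_coe_le hq0).mpr hq1.le
        have h2 : Real.toNNReal q < τ ω := (Real.toNNReal_lt_iff_lt_coe hq0).mpr hq2
        refine Or.inr ⟨q, ⟨h1, ?_⟩, h2⟩
        rw [inf_eq_left.mpr h1]
        rwa [inf_eq_left.mpr h.le] at hvB
    · rintro (⟨h, hA⟩ | ⟨q, ⟨h1, hS'⟩, h2⟩)
      · rwa [inf_eq_right.mpr h]
      · have hlt : v < τ ω := lt_of_le_of_lt h1 h2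
        rw [inf_eq_left.mpr hlt.le]
        rwa [inf_eq_left.mpr h1] at hS'
  rw [hset]
  have hτm : Measurable τ := tau_measurable G hGmono τ hτ
  have hD2 : MeasurableSet
      ({p : ℝ≥0 × Ω | τ p.2 ≤ p.1} ∩ (Set.univ ×ˢ ((fun ω => S (τ ω) ω) ⁻¹' B))) := by
    have h1 : MeasurableSet {p : ℝ≥0 × Ω | τ p.2 ≤ p.1} :=
      measurableSet_le (hτm.comp measurable_snd) measurable_fst
    have h2 : MeasurableSet ((Set.univ : Set ℝ≥0) ×ˢ ((fun ω => S (τ ω) ω) ⁻¹' B)) :=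
      MeasurableSet.univ.prod (stopped_measurable G hGmono S hS τ hτ hB)
    exact h1.inter h2
  refine hD2.union (MeasurableSet.iUnion fun q => ?_)
  have hTq : MeasurableSet[pastSigma G Set.univ τ] {ω | Real.toNNReal q < τ ω} := by
    have : {ω | Real.toNNReal q < τ ω} = {ω | τ ω ≤ Real.toNNReal q}ᶜ := by
      ext ω; simp [not_le]
    rw [this]
    exact (tauLe_mem G hGmono τ hτ _).compl
  exact prod_inter_transfer inferInstance (G (Real.toNNReal q)) (pastSigma G Set.univ τ)
    {ω | Real.toNNReal q < τ ω} hTq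
    (fun F hF => inter_lt_mem G hGmono τ hτ _ hF) _
    (cap_set_measurable G S hS _ hB)

lemma mainAux (G : ℝ≥0 → MeasurableSpace Ω) (hGmono : Monotone G)
    (S : ℝ≥0 → Ω → ℝ) (hS : ProgMeasurableOn G S)
    (t : ℝ≥0) (τ : Ω → ℝ≥0) (hτ : ∀ s, MeasurableSet[G s] {ω | τ ω ≤ s})
    (M : MeasurableSpace Ω) (hPM : pastSigma G Set.univ τ ≤ M)
    (π' : ℝ≥0 → Ω → ℝ≥0)
    (hπ'prog : Measurable[MeasurableSpace.prod Subtype.instMeasurableSpace M]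
      (fun p : Set.Iic t × Ω => π' (↑p.1) p.2))
    (hle : ∀ p : Set.Iic t × Ω, π' (↑p.1) p.2 ≤ τ p.2) :
    Measurable[MeasurableSpace.prod Subtype.instMeasurableSpace M]
      (fun p : Set.Iic t × Ω => S (π' (↑p.1) p.2) p.2) := by
  letI : MeasurableSpace Ω := M
  have hprodle : MeasurableSpace.prod (inferInstance : MeasurableSpace ℝ≥0)
      (pastSigma G Set.univ τ) ≤ MeasurableSpace.prod inferInstance M := by
    unfold MeasurableSpace.prod
    exact sup_le_sup le_rfl (MeasurableSpace.comap_mono hPM)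
  have hg : Measurable[MeasurableSpace.prod inferInstance M]
      (fun p : ℝ≥0 × Ω => S (p.1 ⊓ τ p.2) p.2) :=
    (stoppedJoint_measurable G hGmono S hS τ hτ).mono hprodle le_rfl
  have hΦ : Measurable (fun p : Set.Iic t × Ω => ((π' (↑p.1) p.2 : ℝ≥0), p.2)) :=
    hπ'prog.prodMk measurable_snd
  have hcomp : (fun p : Set.Iic t × Ω => S (π' (↑p.1) p.2) p.2)
      = (fun p : ℝ≥0 × Ω => S (p.1 ⊓ τ p.2) p.2) ∘
        (fun p : Set.Iic t × Ω => (π' (↑p.1) p.2, p.2)) := by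
    funext p
    simp only [Function.comp_apply]
    rw [inf_eq_left.mpr (hle p)]
  rw [hcomp]
  exact hg.comp hΦ

end DelayAux

/-- Inheritance of progressive measurability under execution delays:
if each `S^a` is `𝔾`-progressively measurable and each execution delay `π^a` is
progressively measurable w.r.t. the delayed filtration `𝔾^π` (with
`𝓖^π_t = σ(⋃_b 𝓖_{π^b(t)})`), then each delayed process
`(t,ω) ↦ S^a(π^a(t,ω),ω)` is progressively measurable w.r.t. `𝔾^π`. -/
theorem delayedProcess_progMeasurable
    {Ω I : Type*} [m𝒢 : MeasurableSpace Ω] (P : Measure Ω) [IsProbabilityMeasure P]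
    (G : ℝ≥0 → MeasurableSpace Ω) (hGmono : Monotone G) (hGle : ∀ u, G u ≤ m𝒢)
    (S : I → ℝ≥0 → Ω → ℝ)
    (hSprog : ∀ a, ProgMeasurableOn G (S a))
    (T : ℝ≥0) (hT : 0 < T)
    (π : I → ℝ≥0 → Ω → ℝ≥0)
    (hπstop : ∀ a, ∀ t ≤ T, ∀ u : ℝ≥0, MeasurableSet[G u] {ω | π a t ω ≤ u})
    (hπge : ∀ a, ∀ t ≤ T, ∀ ω, t ≤ π a t ω)
    (hπmono : ∀ a, ∀ t u : ℝ≥0, t ≤ u → u ≤ T → ∀ ω, π a t ω ≤ π a u ω)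
    (hπprog : ∀ a, ∀ t ≤ T,
      Measurable[MeasurableSpace.prod Subtype.instMeasurableSpace
          (⨆ b, pastSigma G Set.univ (π b t))]
        (fun p : Set.Iic t × Ω => π a (↑p.1) p.2)) :
    ∀ a, ∀ t ≤ T,
      Measurable[MeasurableSpace.prod Subtype.instMeasurableSpace
          (⨆ b, pastSigma G Set.univ (π b t))]
        (fun p : Set.Iic t × Ω => S a (π a (↑p.1) p.2) p.2) := by
  intro a t ht
  refine DelayAux.mainAux G hGmono (S a) (hSprog a) t (π a t) (hπstop a t ht)
    (⨆ b, pastSigma G Set.univ (π b t))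
    (le_iSup (fun b => pastSigma G Set.univ (π b t)) a)
    (π a) (hπprog a t ht) ?_
  intro p
  exact hπmono a (↑p.1) t (Set.mem_Iic.mp p.1.2) ht p.2
end
end
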